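/- For every real x with 0 ≤ x < π/2, the real part of e^{2ix} · ∫₀¹ √( (s−1)(s − e^{−2ix}) ) ds is nonzero, where the integral is over real s ∈ (0,1) and √ denotes the principal branch of the complex square root applied to the product (s−1)(s − e^{−2ix}). -/

import Mathlib

open Complex

open Real Set MeasureTheory
set_option maxHeartbeats 1000000
lemma key (x : ℝ) (hx0 : 0 ≤ x) (hx1 : x < Real.pi/2) {s : ℝ} (hs0 : 0 < s) (hs1 : s < 1) :
    0 < (Complex.exp (2*(x:ℂ)*Complex.I) *
      (((s:ℂ)-1) * ((s:ℂ) - Complex.exp (-(2*(x:ℂ)*Complex.I)))) ^ (1/2:ℂ)).re := by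
  set c := Real.cos (2*x) with hc
  set sn := Real.sin (2*x) with hsn
  have hpi := Real.pi_pos
  have hE : Complex.exp (-(2*(x:ℂ)*Complex.I)) = ((c:ℝ):ℂ) - ((sn:ℝ):ℂ)*Complex.I := by
    rw [show -(2*(x:ℂ)*Complex.I) = ((-(2*x):ℝ):ℂ)*Complex.I by push_cast; ring,
      Complex.exp_mul_I, ← Complex.ofReal_cos, ← Complex.ofReal_sin,
      Real.cos_neg, Real.sin_neg, hc, hsn]
    push_cast
    ring
  set w : ℂ := ((s:ℂ)-1) * ((s:ℂ) - Complex.exp (-(2*(x:ℂ)*Complex.I))) with hw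
  have hwre : w.re = (s-1)*(s-c) := by
    rw [hw, hE]; simp [Complex.mul_re]
  have hwim : w.im = (s-1)*sn := by
    rw [hw, hE]; simp [Complex.mul_im]
  have hsn0 : 0 ≤ sn := Real.sin_nonneg_of_nonneg_of_le_pi (by linarith) (by linarith)
  have hcs : c^2 + sn^2 = 1 := by rw [hc, hsn, add_comm]; exact Real.sin_sq_add_cos_sq _
  have habsE : ‖(((c:ℝ):ℂ) - ((sn:ℝ):ℂ)*Complex.I)‖ = 1 := by
    rw [Complex.norm_def, Complex.normSq_apply]
    simp only [Complex.sub_re, Complex.sub_im, Complex.ofReal_re, Complex.ofReal_im,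
      Complex.mul_re, Complex.mul_im, Complex.I_re, Complex.I_im]
    rw [show (c - (sn * 0 - 0 * 1)) * (c - (sn * 0 - 0 * 1)) + (0 - (sn * 1 + 0 * 0)) * (0 - (sn * 1 + 0 * 0)) = 1 by nlinarith]
    exact Real.sqrt_one
  have hw0 : w ≠ 0 := by
    rw [hw, hE]
    apply mul_ne_zero
    · intro h
      have : (s:ℝ) = 1 := by exact_mod_cast (sub_eq_zero.mp h)
      linarith
    · intro h
      have h2 : ‖((s:ℂ))‖ = 1 := by rw [sub_eq_zero.mp h, habsE]
      rw [Complex.norm_real, Real.norm_eq_abs, abs_of_pos hs0] at h2; linarith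
  have ha : 0 < ‖w‖ := norm_pos_iff.mpr hw0
  set θ := Complex.arg w with hθ
  have hθlow : -Real.pi < θ := Complex.neg_pi_lt_arg w
  have hθhi : θ ≤ Real.pi := Complex.arg_le_pi w
  have hupper : θ < Real.pi - 4*x := by
    rcases eq_or_lt_of_le hx0 with hx | hx
    · have hθ0 : θ = 0 := by
        have hc1 : c = 1 := by rw [hc, ← hx]; simp
        have hsn1 : sn = 0 := by rw [hsn, ← hx]; simp
        have hww : w = (((s-1)^2 : ℝ) : ℂ) := by
          rw [hw, hE, hc1, hsn1]; push_cast; ring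
        rw [hθ, hww]
        exact Complex.arg_ofReal_of_nonneg (sq_nonneg _)
      rw [hθ0, ← hx]; linarith
    · have hsnpos : 0 < sn := Real.sin_pos_of_pos_of_lt_pi (by linarith) (by linarith)
      have himneg : w.im < 0 := by rw [hwim]; nlinarith
      have hθneg : θ < 0 := Complex.arg_neg_iff.mpr himneg
      by_cases h4 : 4*x ≤ Real.pi
      · linarith
      · push_neg at h4
        have hcneg : c < 0 := Real.cos_neg_of_pi_div_two_lt_of_lt (by linarith) (by linarith)
        have hc1 : -1 < c := by nlinarith
        set r := ‖((s:ℂ) - (((c:ℝ):ℂ) - ((sn:ℝ):ℂ)*Complex.I))‖ with hr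
        have hr0 : 0 ≤ r := norm_nonneg _
        have hr2 : r^2 = s^2 - 2*s*c + 1 := by
          rw [hr, Complex.sq_norm, Complex.normSq_apply]
          simp only [Complex.sub_re, Complex.sub_im, Complex.ofReal_re, Complex.ofReal_im,
            Complex.mul_re, Complex.mul_im, Complex.I_re, Complex.I_im]
          nlinarith
        have hrpos : 0 < r := by nlinarith
        have haw : ‖w‖ = (1-s)*r := by
          rw [hw, hE, norm_mul, hr]
          congr 1
          rw [show ((s:ℂ)-1) = (((s-1:ℝ)):ℂ) by push_cast; ring, Complex.norm_real, Real.norm_eq_abs,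
            abs_of_neg (by linarith : s-1 < 0)]
          ring
        have hcos4 : Real.cos (4*x) = 2*c^2 - 1 := by
          rw [show (4:ℝ)*x = 2*(2*x) by ring, Real.cos_two_mul]
        have h1 : c - s ≤ c * r := by
          have hid : (c-s)^2 - (c*r)^2 = s*((1-c^2)*(s-2*c)) := by linear_combination (-c^2) * hr2
          have hpos1 : (0:ℝ) ≤ s*((1-c^2)*(s-2*c)) := by
            apply mul_nonneg hs0.le
            apply mul_nonneg (by nlinarith) (by nlinarith)
          nlinarith [mul_pos hrpos (neg_pos.mpr hcneg)]
        have hkey : w.re + ‖w‖ * Real.cos (4*x) < 0 := by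
          rw [hwre, haw, hcos4]
          have h2 : c*r + r*(2*c^2-1) < 0 := by nlinarith [mul_pos (mul_pos hrpos (by linarith : (0:ℝ) < 1-2*c)) (by linarith : (0:ℝ) < c+1)]
          nlinarith
        have hcosθ : Real.cos θ = w.re / ‖w‖ := Complex.cos_arg hw0
        have hlt : Real.cos (-θ) < Real.cos (4*x - Real.pi) := by
          rw [Real.cos_neg, Real.cos_sub_pi, hcosθ, div_lt_iff₀ ha]
          linarith
        have hfin := (Real.strictAntiOn_cos.lt_iff_gt
          (Set.mem_Icc.mpr ⟨by linarith, by linarith⟩)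
          (Set.mem_Icc.mpr ⟨by linarith, by linarith⟩)).mp hlt
        linarith
  set R := Real.exp (Real.log ‖w‖ / 2) with hR
  have h12 : (1/2 : ℂ) = ((1/2 : ℝ) : ℂ) := by norm_num
  have hlre : (Complex.log w * (1/2:ℂ)).re = Real.log ‖w‖ / 2 := by
    rw [h12]
    simp [Complex.mul_re, Complex.log_re]
    ring
  have hlim : (Complex.log w * (1/2:ℂ)).im = θ / 2 := by
    rw [h12]
    simp [Complex.mul_im, Complex.log_im]
    ring
  have hvre : (w ^ (1/2:ℂ)).re = R * Real.cos (θ/2) := by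
    rw [Complex.cpow_def_of_ne_zero hw0, Complex.exp_re, hlre, hlim, hR]
  have hvim : (w ^ (1/2:ℂ)).im = R * Real.sin (θ/2) := by
    rw [Complex.cpow_def_of_ne_zero hw0, Complex.exp_im, hlre, hlim, hR]
  have hexpre : (Complex.exp (2*(x:ℂ)*Complex.I)).re = c := by
    rw [show (2*(x:ℂ)*Complex.I) = ((2*x:ℝ):ℂ)*Complex.I by push_cast; ring]
    exact Complex.exp_ofReal_mul_I_re _
  have hexpim : (Complex.exp (2*(x:ℂ)*Complex.I)).im = sn := by
    rw [show (2*(x:ℂ)*Complex.I) = ((2*x:ℝ):ℂ)*Complex.I by push_cast; ring]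
    exact Complex.exp_ofReal_mul_I_im _
  rw [Complex.mul_re, hexpre, hexpim, hvre, hvim]
  have hRpos : 0 < R := Real.exp_pos _
  have hcomb : c * (R * Real.cos (θ/2)) - sn * (R * Real.sin (θ/2)) = R * Real.cos (2*x + θ/2) := by
    rw [Real.cos_add, hc, hsn]; ring
  rw [hcomb]
  apply mul_pos hRpos
  apply Real.cos_pos_of_mem_Ioo
  constructor <;> linarith



/-- For `0 ≤ x < π/2`, `Re(e^{2ix} ∫₀¹ √((s-1)(s-e^{-2ix})) ds) ≠ 0`
(principal complex square root). -/
theorem stmt_13 (x : ℝ) (hx0 : 0 ≤ x) (hx1 : x < Real.pi / 2) :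
    (Complex.exp (2 * (x : ℂ) * Complex.I) *
      ∫ s in (0 : ℝ)..1,
        (((s : ℂ) - 1) * ((s : ℂ) - Complex.exp (-(2 * (x : ℂ) * Complex.I)))) ^ (1/2 : ℂ)).re
    ≠ 0 := by
  have hpi := Real.pi_pos
  set E := Complex.exp (-(2 * (x:ℂ) * Complex.I)) with hE
  set W : ℝ → ℂ := fun s => ((s:ℂ) - 1) * ((s:ℂ) - E) with hWdef
  have hWc : Continuous W := by
    apply Continuous.mul
    · exact Complex.continuous_ofReal.sub continuous_const
    · exact Complex.continuous_ofReal.sub continuous_const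
  -- slit plane membership for t < 1
  have hslit : ∀ t : ℝ, 0 ≤ t → t < 1 → W t ∈ Complex.slitPlane := by
    intro t ht0 ht1
    set c := Real.cos (2*x) with hc
    set sn := Real.sin (2*x) with hsn
    have hEeq : E = ((c :ℝ):ℂ) - ((sn:ℝ):ℂ)*Complex.I := by
      rw [hE, show -(2*(x:ℂ)*Complex.I) = ((-(2*x):ℝ):ℂ)*Complex.I by push_cast; ring,
        Complex.exp_mul_I, ← Complex.ofReal_cos, ← Complex.ofReal_sin,
        Real.cos_neg, Real.sin_neg, hc, hsn]
      push_cast; ring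
    have him : (W t).im = (t-1) * sn := by
      rw [hWdef]; simp only; rw [hEeq]; simp [Complex.mul_im]
    have hre : (W t).re = (t-1) * (t - c) := by
      rw [hWdef]; simp only; rw [hEeq]; simp [Complex.mul_re]
    rw [Complex.mem_slitPlane_iff]
    rcases eq_or_lt_of_le hx0 with hx | hx
    · left
      rw [hre]
      have hc1 : c = 1 := by rw [hc, ← hx]; simp
      rw [hc1]
      nlinarith
    · right
      rw [him]
      have : 0 < sn := by rw [hsn]; exact Real.sin_pos_of_pos_of_lt_pi (by linarith) (by linarith)
      nlinarith
  have hcont : ContinuousOn (fun s : ℝ => W s ^ (1/2:ℂ)) (Set.Icc 0 1) := by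
    intro t ht
    apply ContinuousAt.continuousWithinAt
    rcases eq_or_lt_of_le ht.2 with h1 | h1
    · -- t = 1
      subst h1
      have h0 : W 1 = 0 := by rw [hWdef]; simp
      have hC : ContinuousAt (fun p : ℂ × ℂ => p.1 ^ p.2) (W 1, (1/2:ℂ)) := by
        rw [h0]
        exact Complex.continuousAt_cpow_zero_of_re_pos (by norm_num)
      have hpair : ContinuousAt (fun s : ℝ => (W s, (1/2:ℂ))) 1 :=
        (hWc.prodMk continuous_const).continuousAt
      have hcomp := ContinuousAt.comp (x := (1:ℝ)) (g := fun p : ℂ × ℂ => p.1 ^ p.2) hC hpair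
      exact hcomp
    · exact (continuousAt_cpow_const (hslit t ht.1 h1)).comp hWc.continuousAt
  have hint : IntervalIntegrable (fun s : ℝ => W s ^ (1/2:ℂ)) volume 0 1 := by
    apply ContinuousOn.intervalIntegrable
    rwa [Set.uIcc_of_le (by norm_num : (0:ℝ) ≤ 1)]
  have hint2 : IntervalIntegrable
      (fun s : ℝ => Complex.exp (2*(x:ℂ)*Complex.I) * W s ^ (1/2:ℂ)) volume 0 1 :=
    hint.const_mul _
  rw [← intervalIntegral.integral_const_mul]
  have hre : (∫ s in (0:ℝ)..1, Complex.exp (2*(x:ℂ)*Complex.I) * W s ^ (1/2:ℂ)).re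
      = ∫ s in (0:ℝ)..1, (Complex.exp (2*(x:ℂ)*Complex.I) * W s ^ (1/2:ℂ)).re :=
    (Complex.reCLM.intervalIntegral_comp_comm hint2).symm
  rw [hre]
  have hre_int : IntervalIntegrable
      (fun s : ℝ => (Complex.exp (2*(x:ℂ)*Complex.I) * W s ^ (1/2:ℂ)).re) volume 0 1 :=
    ⟨Complex.reCLM.integrable_comp hint2.1, Complex.reCLM.integrable_comp hint2.2⟩
  apply ne_of_gt
  apply intervalIntegral.intervalIntegral_pos_of_pos_on hre_int _ (by norm_num)
  intro s hs
  exact key x hx0 hx1 hs.1 hs.2
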